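/- Let Û = ∑_{s=0}^{S} U_s with U_s = ∑_{m} b_{s,m} u_{s,m₁}^{(1)} ⊗ u_{s,m₂}^{(2)} ⊗ u_{s,m₃}^{(3)} orthogonal Tucker tensors with cores B_s (i.e. the side matrices of each U_s have orthonormal columns). Let Û^{(ℓ)} be the concatenation of all mode-ℓ side matrices, with singular values σ_{ℓ,1} ≥ σ_{ℓ,2} ≥ …, and let U⁰_(r) be the projection of Û onto the rₗ dominant left singular vectors of Û^{(ℓ)} in each mode ℓ. Then ‖Û − U⁰_(r)‖ ≤ (∑_{s=0}^S ‖B_s‖²)^{1/2} · ∑_{ℓ=1}^{3} (∑_{k=rₗ+1} σ_{ℓ,k}²)^{1/2} in the Frobenius norm. -/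

import Mathlib

open Finset Real

private lemma cs_sum {ι : Type*} [Fintype ι] (f g : ι → ℝ) :
    ∑ i, f i * g i ≤ Real.sqrt (∑ i, f i ^ 2) * Real.sqrt (∑ i, g i ^ 2) := by
  have h := Finset.sum_mul_sq_le_sq_mul_sq Finset.univ f g
  calc ∑ i, f i * g i ≤ |∑ i, f i * g i| := le_abs_self _
    _ = Real.sqrt ((∑ i, f i * g i) ^ 2) := (Real.sqrt_sq_eq_abs _).symm
    _ ≤ Real.sqrt ((∑ i, f i ^ 2) * ∑ i, g i ^ 2) := Real.sqrt_le_sqrt h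
    _ = _ := Real.sqrt_mul (by positivity) _

private lemma tri_sum {ι : Type*} [Fintype ι] (a b : ι → ℝ) :
    Real.sqrt (∑ i, (a i + b i) ^ 2) ≤
      Real.sqrt (∑ i, a i ^ 2) + Real.sqrt (∑ i, b i ^ 2) := by
  have hA : (0:ℝ) ≤ ∑ i, a i ^ 2 := by positivity
  have hB : (0:ℝ) ≤ ∑ i, b i ^ 2 := by positivity
  have key : ∑ i, (a i + b i) ^ 2 ≤
      (Real.sqrt (∑ i, a i ^ 2) + Real.sqrt (∑ i, b i ^ 2)) ^ 2 := by
    have h1 : ∑ i, (a i + b i) ^ 2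
        = ∑ i, a i ^ 2 + 2 * (∑ i, a i * b i) + ∑ i, b i ^ 2 := by
      rw [Finset.mul_sum, ← Finset.sum_add_distrib, ← Finset.sum_add_distrib]
      exact Finset.sum_congr rfl fun i _ => by ring
    have h2 : (Real.sqrt (∑ i, a i ^ 2) + Real.sqrt (∑ i, b i ^ 2)) ^ 2
        = ∑ i, a i ^ 2 + 2 * (Real.sqrt (∑ i, a i ^ 2) * Real.sqrt (∑ i, b i ^ 2))
          + ∑ i, b i ^ 2 := by
      rw [add_sq, Real.sq_sqrt hA, Real.sq_sqrt hB]; ring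
    rw [h1, h2]
    have := cs_sum a b
    linarith
  calc Real.sqrt (∑ i, (a i + b i) ^ 2)
      ≤ Real.sqrt ((Real.sqrt (∑ i, a i ^ 2) + Real.sqrt (∑ i, b i ^ 2)) ^ 2) :=
        Real.sqrt_le_sqrt key
    _ = _ := Real.sqrt_sq (by positivity)

private lemma orthexp {γ ι : Type*} [DecidableEq γ] [Fintype ι] (T : Finset γ) (a : γ → ℝ)
    (w : γ → ι → ℝ)
    (hw : ∀ c ∈ T, ∀ c' ∈ T, ∑ i, w c i * w c' i = if c = c' then 1 else 0) :
    ∑ i, (∑ c ∈ T, a c * w c i) ^ 2 = ∑ c ∈ T, a c ^ 2 := by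
  have h1 : ∀ i, (∑ c ∈ T, a c * w c i) ^ 2
      = ∑ c ∈ T, ∑ c' ∈ T, (a c * w c i) * (a c' * w c' i) := by
    intro i; rw [sq, Finset.sum_mul_sum]
  simp_rw [h1]
  rw [Finset.sum_comm]
  refine Finset.sum_congr rfl fun c hc => ?_
  rw [Finset.sum_comm]
  have h2 : ∀ c' ∈ T, ∑ i, (a c * w c i) * (a c' * w c' i)
      = (a c * a c') * ∑ i, w c i * w c' i := by
    intro c' _; rw [Finset.mul_sum]; exact Finset.sum_congr rfl fun i _ => by ring
  rw [Finset.sum_congr rfl h2]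
  have h3 : ∀ c' ∈ T, (a c * a c') * ∑ i, w c i * w c' i
      = if c = c' then a c * a c' else 0 := by
    intro c' hc'; rw [hw c hc c' hc']; split <;> simp
  rw [Finset.sum_congr rfl h3, Finset.sum_ite_eq T c (fun c' => a c * a c'), if_pos hc, sq]

private lemma prod_orth {ι₁ ι₂ γ : Type*} [Fintype ι₁] [Fintype ι₂] [DecidableEq γ]
    (T : Finset γ) (w1 : γ → ι₁ → ℝ) (w2 : γ → ι₂ → ℝ)
    (h1 : ∀ c ∈ T, ∀ c' ∈ T, ∑ i, w1 c i * w1 c' i = if c = c' then 1 else 0)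
    (h2 : ∀ c ∈ T, ∀ c' ∈ T, ∑ i, w2 c i * w2 c' i = if c = c' then 1 else 0) :
    ∀ c ∈ T, ∀ c' ∈ T,
      ∑ p : ι₁ × ι₂, (w1 c p.1 * w2 c p.2) * (w1 c' p.1 * w2 c' p.2)
        = if c = c' then 1 else 0 := by
  intro c hc c' hc'
  calc ∑ p : ι₁ × ι₂, (w1 c p.1 * w2 c p.2) * (w1 c' p.1 * w2 c' p.2)
      = ∑ i, ∑ j, (w1 c i * w1 c' i) * (w2 c j * w2 c' j) := by
        rw [Fintype.sum_prod_type]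
        exact Finset.sum_congr rfl fun i _ => Finset.sum_congr rfl fun j _ => by ring
    _ = (∑ i, w1 c i * w1 c' i) * (∑ j, w2 c j * w2 c' j) :=
        (Finset.sum_mul_sum _ _ _ _).symm
    _ = _ := by rw [h1 c hc c' hc', h2 c hc c' hc']; split <;> simp

private lemma prod_orth' {ι₁ ι₂ α β : Type*} [Fintype ι₁] [Fintype ι₂]
    [Fintype α] [Fintype β] [DecidableEq α] [DecidableEq β]
    (w1 : α → ι₁ → ℝ) (w2 : β → ι₂ → ℝ)
    (h1 : ∀ a a', ∑ i, w1 a i * w1 a' i = if a = a' then 1 else 0)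
    (h2 : ∀ b b', ∑ i, w2 b i * w2 b' i = if b = b' then 1 else 0) :
    ∀ (q : α × β), q ∈ (Finset.univ : Finset (α × β)) → ∀ (q' : α × β),
      q' ∈ (Finset.univ : Finset (α × β)) →
      ∑ p : ι₁ × ι₂, (w1 q.1 p.1 * w2 q.2 p.2) * (w1 q'.1 p.1 * w2 q'.2 p.2)
        = if q = q' then 1 else 0 := by
  intro q _ q' _
  calc ∑ p : ι₁ × ι₂, (w1 q.1 p.1 * w2 q.2 p.2) * (w1 q'.1 p.1 * w2 q'.2 p.2)
      = ∑ i, ∑ j, (w1 q.1 i * w1 q'.1 i) * (w2 q.2 j * w2 q'.2 j) := by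
        rw [Fintype.sum_prod_type]
        exact Finset.sum_congr rfl fun i _ => Finset.sum_congr rfl fun j _ => by ring
    _ = (∑ i, w1 q.1 i * w1 q'.1 i) * (∑ j, w2 q.2 j * w2 q'.2 j) :=
        (Finset.sum_mul_sum _ _ _ _).symm
    _ = _ := by
        rw [h1 q.1 q'.1, h2 q.2 q'.2]
        by_cases hA : q.1 = q'.1 <;> by_cases hB : q.2 = q'.2 <;>
          simp [hA, hB, Prod.ext_iff]

private lemma matprod {ι γ β : Type*} [Fintype ι] [Fintype γ] [Fintype β]
    (D : ι → γ → ℝ) (G : γ → β → ℝ) :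
    ∑ i, ∑ b, (∑ c, D i c * G c b) ^ 2
      ≤ (∑ i, ∑ c, D i c ^ 2) * (∑ c, ∑ b, G c b ^ 2) := by
  calc ∑ i, ∑ b, (∑ c, D i c * G c b) ^ 2
      ≤ ∑ i, ∑ b, (∑ c, D i c ^ 2) * (∑ c, G c b ^ 2) :=
        Finset.sum_le_sum fun i _ => Finset.sum_le_sum fun b _ =>
          Finset.sum_mul_sq_le_sq_mul_sq Finset.univ _ _
    _ = (∑ i, ∑ c, D i c ^ 2) * (∑ b, ∑ c, G c b ^ 2) :=
        (Finset.sum_mul_sum _ _ _ _).symm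
    _ = (∑ i, ∑ c, D i c ^ 2) * (∑ c, ∑ b, G c b ^ 2) := by congr 1; exact Finset.sum_comm

private lemma bessel {n rr R : ℕ} (hrr : rr ≤ R) (z : ℕ → Fin n → ℝ)
    (hz : ∀ t < R, ∀ t' < R, ∑ i, z t i * z t' i = if t = t' then 1 else 0)
    (X : Fin n → ℝ) :
    ∑ i, (∑ i', (∑ t ∈ Finset.range rr, z t i * z t i') * X i') ^ 2 ≤ ∑ i, X i ^ 2 := by
  set c : ℕ → ℝ := fun t => ∑ i', z t i' * X i' with hc
  have hzT : ∀ t ∈ Finset.range rr, ∀ t' ∈ Finset.range rr,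
      ∑ i, z t i * z t' i = if t = t' then 1 else 0 := fun t ht t' ht' =>
    hz t (lt_of_lt_of_le (Finset.mem_range.mp ht) hrr)
      t' (lt_of_lt_of_le (Finset.mem_range.mp ht') hrr)
  have hY : ∀ i, (∑ i', (∑ t ∈ Finset.range rr, z t i * z t i') * X i')
      = ∑ t ∈ Finset.range rr, c t * z t i := by
    intro i
    calc ∑ i', (∑ t ∈ Finset.range rr, z t i * z t i') * X i'
        = ∑ i', ∑ t ∈ Finset.range rr, (z t i' * X i') * z t i := by
          refine Finset.sum_congr rfl fun i' _ => ?_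
          rw [Finset.sum_mul]; exact Finset.sum_congr rfl fun t _ => by ring
      _ = ∑ t ∈ Finset.range rr, ∑ i', (z t i' * X i') * z t i := Finset.sum_comm
      _ = ∑ t ∈ Finset.range rr, c t * z t i := by
          refine Finset.sum_congr rfl fun t _ => ?_
          rw [hc, Finset.sum_mul]
  have hYsq : ∑ i, (∑ t ∈ Finset.range rr, c t * z t i) ^ 2
      = ∑ t ∈ Finset.range rr, c t ^ 2 := orthexp _ c (fun t i => z t i) hzT
  have hXY : ∑ i, X i * (∑ t ∈ Finset.range rr, c t * z t i)
      = ∑ t ∈ Finset.range rr, c t ^ 2 := by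
    calc ∑ i, X i * (∑ t ∈ Finset.range rr, c t * z t i)
        = ∑ i, ∑ t ∈ Finset.range rr, c t * (z t i * X i) := by
          refine Finset.sum_congr rfl fun i _ => ?_
          rw [Finset.mul_sum]; exact Finset.sum_congr rfl fun t _ => by ring
      _ = ∑ t ∈ Finset.range rr, ∑ i, c t * (z t i * X i) := Finset.sum_comm
      _ = ∑ t ∈ Finset.range rr, c t ^ 2 := by
          refine Finset.sum_congr rfl fun t _ => ?_
          rw [← Finset.mul_sum, sq]
  have hexp : ∑ i, (X i - ∑ t ∈ Finset.range rr, c t * z t i) ^ 2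
      = ∑ i, X i ^ 2 - 2 * (∑ i, X i * (∑ t ∈ Finset.range rr, c t * z t i))
        + ∑ i, (∑ t ∈ Finset.range rr, c t * z t i) ^ 2 := by
    rw [Finset.mul_sum, ← Finset.sum_sub_distrib, ← Finset.sum_add_distrib]
    exact Finset.sum_congr rfl fun i _ => by ring
  have hnn : (0:ℝ) ≤ ∑ i, (X i - ∑ t ∈ Finset.range rr, c t * z t i) ^ 2 := by positivity
  simp_rw [hY]
  rw [hYsq]
  rw [hexp, hXY, hYsq] at hnn
  linarith

private lemma contract {n rr R : ℕ} (hrr : rr ≤ R) {β : Type*} [Fintype β]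
    (z : ℕ → Fin n → ℝ)
    (hz : ∀ t < R, ∀ t' < R, ∑ i, z t i * z t' i = if t = t' then 1 else 0)
    (X : Fin n → β → ℝ) :
    ∑ i, ∑ b, (∑ i', (∑ t ∈ Finset.range rr, z t i * z t i') * X i' b) ^ 2
      ≤ ∑ i, ∑ b, X i b ^ 2 := by
  rw [Finset.sum_comm, Finset.sum_comm (f := fun i b => X i b ^ 2)]
  exact Finset.sum_le_sum fun b _ => bessel hrr z hz (fun i => X i b)

private lemma mode_bound {n rr R : ℕ} (hrr : rr ≤ R) {γ β : Type*}
    [DecidableEq γ] [Fintype γ] [Fintype β]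
    (σ : ℕ → ℝ) (z : ℕ → Fin n → ℝ) (v : ℕ → γ → ℝ)
    (hz : ∀ t < R, ∀ t' < R, ∑ i, z t i * z t' i = if t = t' then 1 else 0)
    (hv : ∀ t < R, ∀ t' < R, ∑ c, v t c * v t' c = if t = t' then 1 else 0)
    (uu : γ → Fin n → ℝ)
    (huu : ∀ c i, uu c i = ∑ t ∈ Finset.range R, σ t * z t i * v t c)
    (G : γ → β → ℝ) (X : Fin n → β → ℝ)
    (hX : ∀ i b, X i b = ∑ c, uu c i * G c b) :
    ∑ i, ∑ b, (X i b - ∑ i', (∑ t ∈ Finset.range rr, z t i * z t i') * X i' b) ^ 2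
      ≤ (∑ c, ∑ b, G c b ^ 2) * ∑ t ∈ Finset.Ico rr R, σ t ^ 2 := by
  set D : Fin n → γ → ℝ := fun i c => ∑ t ∈ Finset.Ico rr R, σ t * z t i * v t c with hD
  have hzu : ∀ t < R, ∀ c, ∑ i', z t i' * uu c i' = σ t * v t c := by
    intro t ht c
    calc ∑ i', z t i' * uu c i'
        = ∑ i', ∑ t' ∈ Finset.range R, (σ t' * v t' c) * (z t i' * z t' i') := by
          refine Finset.sum_congr rfl fun i' _ => ?_
          rw [huu, Finset.mul_sum]; exact Finset.sum_congr rfl fun t' _ => by ring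
      _ = ∑ t' ∈ Finset.range R, ∑ i', (σ t' * v t' c) * (z t i' * z t' i') :=
          Finset.sum_comm
      _ = ∑ t' ∈ Finset.range R, (σ t' * v t' c) * ∑ i', z t i' * z t' i' := by
          exact Finset.sum_congr rfl fun t' _ => (Finset.mul_sum _ _ _).symm
      _ = σ t * v t c := by
          have h3 : ∀ t' ∈ Finset.range R, (σ t' * v t' c) * (∑ i', z t i' * z t' i')
              = if t = t' then σ t' * v t' c else 0 := by
            intro t' ht'
            rw [hz t ht t' (Finset.mem_range.mp ht')]; split <;> simp
          rw [Finset.sum_congr rfl h3,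
            Finset.sum_ite_eq (Finset.range R) t (fun t' => σ t' * v t' c),
            if_pos (Finset.mem_range.mpr ht)]
  have hPu : ∀ c i, ∑ i', (∑ t ∈ Finset.range rr, z t i * z t i') * uu c i'
      = ∑ t ∈ Finset.range rr, σ t * z t i * v t c := by
    intro c i
    calc ∑ i', (∑ t ∈ Finset.range rr, z t i * z t i') * uu c i'
        = ∑ i', ∑ t ∈ Finset.range rr, z t i * (z t i' * uu c i') := by
          refine Finset.sum_congr rfl fun i' _ => ?_
          rw [Finset.sum_mul]; exact Finset.sum_congr rfl fun t _ => by ring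
      _ = ∑ t ∈ Finset.range rr, ∑ i', z t i * (z t i' * uu c i') := Finset.sum_comm
      _ = ∑ t ∈ Finset.range rr, z t i * ∑ i', z t i' * uu c i' :=
          Finset.sum_congr rfl fun t _ => (Finset.mul_sum _ _ _).symm
      _ = ∑ t ∈ Finset.range rr, σ t * z t i * v t c := by
          refine Finset.sum_congr rfl fun t ht => ?_
          rw [hzu t (lt_of_lt_of_le (Finset.mem_range.mp ht) hrr)]; ring
  have hsplit : ∀ c i, uu c i - ∑ t ∈ Finset.range rr, σ t * z t i * v t c = D i c := by
    intro c i
    rw [huu, hD]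
    have hun : Finset.range R = Finset.range rr ∪ Finset.Ico rr R := by
      rw [Finset.range_eq_Ico, Finset.range_eq_Ico]
      exact (Finset.Ico_union_Ico_eq_Ico (Nat.zero_le rr) hrr).symm
    rw [hun, Finset.sum_union]
    · ring
    · rw [Finset.range_eq_Ico]; exact Finset.Ico_disjoint_Ico_consecutive 0 rr R
  have hdiff : ∀ i b,
      X i b - (∑ i', (∑ t ∈ Finset.range rr, z t i * z t i') * X i' b)
        = ∑ c, D i c * G c b := by
    intro i b
    have h1 : ∑ i', (∑ t ∈ Finset.range rr, z t i * z t i') * X i' b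
        = ∑ c, (∑ t ∈ Finset.range rr, σ t * z t i * v t c) * G c b := by
      calc ∑ i', (∑ t ∈ Finset.range rr, z t i * z t i') * X i' b
          = ∑ i', ∑ c, ((∑ t ∈ Finset.range rr, z t i * z t i') * uu c i') * G c b := by
            refine Finset.sum_congr rfl fun i' _ => ?_
            rw [hX, Finset.mul_sum]
            exact Finset.sum_congr rfl fun c _ => by ring
        _ = ∑ c, ∑ i', ((∑ t ∈ Finset.range rr, z t i * z t i') * uu c i') * G c b :=
            Finset.sum_comm
        _ = ∑ c, (∑ i', (∑ t ∈ Finset.range rr, z t i * z t i') * uu c i') * G c b :=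
            Finset.sum_congr rfl fun c _ => (Finset.sum_mul _ _ _).symm
        _ = ∑ c, (∑ t ∈ Finset.range rr, σ t * z t i * v t c) * G c b :=
            Finset.sum_congr rfl fun c _ => by rw [hPu]
    rw [hX, h1, ← Finset.sum_sub_distrib]
    exact Finset.sum_congr rfl fun c _ => by rw [← sub_mul, hsplit]
  have hIco : ∀ t ∈ Finset.Ico rr R, t < R := fun t ht => (Finset.mem_Ico.mp ht).2
  have hDsq : ∑ i, ∑ c, D i c ^ 2 = ∑ t ∈ Finset.Ico rr R, σ t ^ 2 := by
    have horth := prod_orth (Finset.Ico rr R) (fun t i => z t i) (fun t c => v t c)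
      (fun t ht t' ht' => hz t (hIco t ht) t' (hIco t' ht'))
      (fun t ht t' ht' => hv t (hIco t ht) t' (hIco t' ht'))
    have hoe := orthexp (ι := Fin n × γ) (Finset.Ico rr R) σ
      (fun t p => z t p.1 * v t p.2) horth
    calc ∑ i, ∑ c, D i c ^ 2
        = ∑ p : Fin n × γ, (∑ t ∈ Finset.Ico rr R, σ t * (z t p.1 * v t p.2)) ^ 2 := by
          rw [Fintype.sum_prod_type]
          refine Finset.sum_congr rfl fun i _ => Finset.sum_congr rfl fun c _ => ?_
          rw [hD]
          congr 1
          exact Finset.sum_congr rfl fun t _ => by ring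
      _ = ∑ t ∈ Finset.Ico rr R, σ t ^ 2 := hoe
  calc ∑ i, ∑ b, (X i b - ∑ i', (∑ t ∈ Finset.range rr, z t i * z t i') * X i' b) ^ 2
      = ∑ i, ∑ b, (∑ c, D i c * G c b) ^ 2 := by
        refine Finset.sum_congr rfl fun i _ => Finset.sum_congr rfl fun b _ => ?_
        rw [hdiff]
    _ ≤ (∑ i, ∑ c, D i c ^ 2) * (∑ c, ∑ b, G c b ^ 2) := matprod D G
    _ = (∑ c, ∑ b, G c b ^ 2) * ∑ t ∈ Finset.Ico rr R, σ t ^ 2 := by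
        rw [hDsq, mul_comm]

private lemma prod_split {n : ℕ} (f : Fin n → Fin n → ℝ) :
    ∑ x, ∑ y, f x y = ∑ b : Fin n × Fin n, f b.1 b.2 := by
  rw [Fintype.sum_prod_type]

set_option maxHeartbeats 1000000

theorem tucker_sum_to_tucker_error_bound (n S : ℕ)
    (r : Fin (S + 1) → Fin 3 → ℕ) (rr : Fin 3 → ℕ)
    (u : (s : Fin (S + 1)) → (ℓ : Fin 3) → Fin (r s ℓ) → Fin n → ℝ)
    (B : (s : Fin (S + 1)) → Fin (r s 0) → Fin (r s 1) → Fin (r s 2) → ℝ)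
    (hu : ∀ s ℓ m m', ∑ i, u s ℓ m i * u s ℓ m' i = if m = m' then 1 else 0)
    (U : Fin (S + 1) → Fin n → Fin n → Fin n → ℝ)
    (hU : ∀ s i j k, U s i j k =
      ∑ m1, ∑ m2, ∑ m3, B s m1 m2 m3 * u s 0 m1 i * u s 1 m2 j * u s 2 m3 k)
    (Uhat : Fin n → Fin n → Fin n → ℝ)
    (hUhat : ∀ i j k, Uhat i j k = ∑ s, U s i j k)
    (Rtot : Fin 3 → ℕ) (hRtot : ∀ ℓ, Rtot ℓ = min n (∑ s, r s ℓ))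
    (σ : Fin 3 → ℕ → ℝ) (z : Fin 3 → ℕ → Fin n → ℝ)
    (v : (ℓ : Fin 3) → ℕ → (Σ s : Fin (S + 1), Fin (r s ℓ)) → ℝ)
    (hσnn : ∀ ℓ k, 0 ≤ σ ℓ k)
    (hσdec : ∀ ℓ k k', k ≤ k' → σ ℓ k' ≤ σ ℓ k)
    (hz : ∀ ℓ, ∀ k < Rtot ℓ, ∀ k' < Rtot ℓ,
      ∑ i, z ℓ k i * z ℓ k' i = if k = k' then 1 else 0)
    (hv : ∀ ℓ, ∀ k < Rtot ℓ, ∀ k' < Rtot ℓ,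
      ∑ c : (Σ s : Fin (S + 1), Fin (r s ℓ)), v ℓ k c * v ℓ k' c = if k = k' then 1 else 0)
    (hsvd : ∀ ℓ s m i, u s ℓ m i =
      ∑ t ∈ Finset.range (Rtot ℓ), σ ℓ t * z ℓ t i * v ℓ t ⟨s, m⟩)
    (hrr : ∀ ℓ, rr ℓ ≤ Rtot ℓ)
    (P : Fin 3 → Fin n → Fin n → ℝ)
    (hP : ∀ ℓ i i', P ℓ i i' = ∑ t ∈ Finset.range (rr ℓ), z ℓ t i * z ℓ t i')
    (U0 : Fin n → Fin n → Fin n → ℝ)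
    (hU0 : ∀ i j k, U0 i j k =
      ∑ i', ∑ j', ∑ k', P 0 i i' * P 1 j j' * P 2 k k' * Uhat i' j' k') :
    Real.sqrt (∑ i, ∑ j, ∑ k, (Uhat i j k - U0 i j k) ^ 2) ≤
      Real.sqrt (∑ s, ∑ m1, ∑ m2, ∑ m3, (B s m1 m2 m3) ^ 2) *
        ∑ ℓ : Fin 3, Real.sqrt (∑ k ∈ Finset.Ico (rr ℓ) (Rtot ℓ), (σ ℓ k) ^ 2) := by
  have hB2nn : (0:ℝ) ≤ ∑ s, ∑ m1, ∑ m2, ∑ m3, (B s m1 m2 m3) ^ 2 := by positivity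
  -- mode-wise expansions of Uhat
  have hUhat0 : ∀ i j k, Uhat i j k =
      ∑ c : (Σ s : Fin (S + 1), Fin (r s 0)), u c.1 0 c.2 i *
        (∑ m2, ∑ m3, B c.1 c.2 m2 m3 * u c.1 1 m2 j * u c.1 2 m3 k) := by
    intro i j k
    rw [hUhat, ← Finset.univ_sigma_univ, Finset.sum_sigma]
    refine Finset.sum_congr rfl fun s _ => ?_
    rw [hU]
    refine Finset.sum_congr rfl fun m1 _ => ?_
    rw [Finset.mul_sum]
    refine Finset.sum_congr rfl fun m2 _ => ?_
    rw [Finset.mul_sum]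
    exact Finset.sum_congr rfl fun m3 _ => by ring
  have hUhat1 : ∀ i j k, Uhat i j k =
      ∑ c : (Σ s : Fin (S + 1), Fin (r s 1)), u c.1 1 c.2 j *
        (∑ m1, ∑ m3, B c.1 m1 c.2 m3 * u c.1 0 m1 i * u c.1 2 m3 k) := by
    intro i j k
    rw [hUhat, ← Finset.univ_sigma_univ, Finset.sum_sigma]
    refine Finset.sum_congr rfl fun s _ => ?_
    rw [hU]
    refine (Finset.sum_comm (f := fun m1 m2 => ∑ m3,
      B s m1 m2 m3 * u s 0 m1 i * u s 1 m2 j * u s 2 m3 k)).trans ?_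
    refine Finset.sum_congr rfl fun m2 _ => ?_
    rw [Finset.mul_sum]
    refine Finset.sum_congr rfl fun m1 _ => ?_
    rw [Finset.mul_sum]
    exact Finset.sum_congr rfl fun m3 _ => by ring
  have hUhat2 : ∀ i j k, Uhat i j k =
      ∑ c : (Σ s : Fin (S + 1), Fin (r s 2)), u c.1 2 c.2 k *
        (∑ m1, ∑ m2, B c.1 m1 m2 c.2 * u c.1 0 m1 i * u c.1 1 m2 j) := by
    intro i j k
    rw [hUhat, ← Finset.univ_sigma_univ, Finset.sum_sigma]
    refine Finset.sum_congr rfl fun s _ => ?_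
    rw [hU]
    refine ((Finset.sum_congr rfl fun m1 _ => (Finset.sum_comm (f := fun m2 m3 =>
      B s m1 m2 m3 * u s 0 m1 i * u s 1 m2 j * u s 2 m3 k))).trans
      (Finset.sum_comm (f := fun m1 m3 => ∑ m2,
      B s m1 m2 m3 * u s 0 m1 i * u s 1 m2 j * u s 2 m3 k))).trans ?_
    refine Finset.sum_congr rfl fun m3 _ => ?_
    rw [Finset.mul_sum]
    refine Finset.sum_congr rfl fun m1 _ => ?_
    rw [Finset.mul_sum]
    exact Finset.sum_congr rfl fun m2 _ => by ring
  -- core Frobenius norms of the mode matricizations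
  have hG0sq : ∑ c : (Σ s : Fin (S + 1), Fin (r s 0)), ∑ b : Fin n × Fin n,
      (∑ m2, ∑ m3, B c.1 c.2 m2 m3 * u c.1 1 m2 b.1 * u c.1 2 m3 b.2) ^ 2
      = ∑ s, ∑ m1, ∑ m2, ∑ m3, (B s m1 m2 m3) ^ 2 := by
    rw [← Finset.univ_sigma_univ, Finset.sum_sigma]
    refine Finset.sum_congr rfl fun s _ => Finset.sum_congr rfl fun m1 _ => ?_
    have horth := prod_orth' (fun m2 => u s 1 m2) (fun m3 => u s 2 m3) (hu s 1) (hu s 2)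
    have hoe := orthexp (ι := Fin n × Fin n)
      (Finset.univ : Finset (Fin (r s 1) × Fin (r s 2)))
      (fun q => B s m1 q.1 q.2) (fun q b => u s 1 q.1 b.1 * u s 2 q.2 b.2) horth
    calc ∑ b : Fin n × Fin n,
        (∑ m2, ∑ m3, B s m1 m2 m3 * u s 1 m2 b.1 * u s 2 m3 b.2) ^ 2
        = ∑ b : Fin n × Fin n, (∑ q : Fin (r s 1) × Fin (r s 2),
            B s m1 q.1 q.2 * (u s 1 q.1 b.1 * u s 2 q.2 b.2)) ^ 2 := by
          refine Finset.sum_congr rfl fun b _ => ?_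
          congr 1
          rw [Fintype.sum_prod_type]
          exact Finset.sum_congr rfl fun m2 _ => Finset.sum_congr rfl fun m3 _ => by ring
      _ = ∑ q : Fin (r s 1) × Fin (r s 2), (B s m1 q.1 q.2) ^ 2 := hoe
      _ = ∑ m2, ∑ m3, (B s m1 m2 m3) ^ 2 := Fintype.sum_prod_type _
  have hG1sq : ∑ c : (Σ s : Fin (S + 1), Fin (r s 1)), ∑ b : Fin n × Fin n,
      (∑ m1, ∑ m3, B c.1 m1 c.2 m3 * u c.1 0 m1 b.1 * u c.1 2 m3 b.2) ^ 2
      = ∑ s, ∑ m1, ∑ m2, ∑ m3, (B s m1 m2 m3) ^ 2 := by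
    rw [← Finset.univ_sigma_univ, Finset.sum_sigma]
    refine Finset.sum_congr rfl fun s _ => ?_
    have inner : ∀ m2 : Fin (r s 1), ∑ b : Fin n × Fin n,
        (∑ m1, ∑ m3, B s m1 m2 m3 * u s 0 m1 b.1 * u s 2 m3 b.2) ^ 2
        = ∑ m1, ∑ m3, (B s m1 m2 m3) ^ 2 := by
      intro m2
      have horth := prod_orth' (fun m1 => u s 0 m1) (fun m3 => u s 2 m3) (hu s 0) (hu s 2)
      have hoe := orthexp (ι := Fin n × Fin n)
        (Finset.univ : Finset (Fin (r s 0) × Fin (r s 2)))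
        (fun q => B s q.1 m2 q.2) (fun q b => u s 0 q.1 b.1 * u s 2 q.2 b.2) horth
      calc ∑ b : Fin n × Fin n,
          (∑ m1, ∑ m3, B s m1 m2 m3 * u s 0 m1 b.1 * u s 2 m3 b.2) ^ 2
          = ∑ b : Fin n × Fin n, (∑ q : Fin (r s 0) × Fin (r s 2),
              B s q.1 m2 q.2 * (u s 0 q.1 b.1 * u s 2 q.2 b.2)) ^ 2 := by
            refine Finset.sum_congr rfl fun b _ => ?_
            congr 1
            rw [Fintype.sum_prod_type]
            exact Finset.sum_congr rfl fun m1 _ => Finset.sum_congr rfl fun m3 _ => by ring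
        _ = ∑ q : Fin (r s 0) × Fin (r s 2), (B s q.1 m2 q.2) ^ 2 := hoe
        _ = ∑ m1, ∑ m3, (B s m1 m2 m3) ^ 2 := Fintype.sum_prod_type _
    rw [Finset.sum_congr rfl fun m2 _ => inner m2]
    exact Finset.sum_comm
  have hG2sq : ∑ c : (Σ s : Fin (S + 1), Fin (r s 2)), ∑ b : Fin n × Fin n,
      (∑ m1, ∑ m2, B c.1 m1 m2 c.2 * u c.1 0 m1 b.1 * u c.1 1 m2 b.2) ^ 2
      = ∑ s, ∑ m1, ∑ m2, ∑ m3, (B s m1 m2 m3) ^ 2 := by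
    rw [← Finset.univ_sigma_univ, Finset.sum_sigma]
    refine Finset.sum_congr rfl fun s _ => ?_
    have inner : ∀ m3 : Fin (r s 2), ∑ b : Fin n × Fin n,
        (∑ m1, ∑ m2, B s m1 m2 m3 * u s 0 m1 b.1 * u s 1 m2 b.2) ^ 2
        = ∑ m1, ∑ m2, (B s m1 m2 m3) ^ 2 := by
      intro m3
      have horth := prod_orth' (fun m1 => u s 0 m1) (fun m2 => u s 1 m2) (hu s 0) (hu s 1)
      have hoe := orthexp (ι := Fin n × Fin n)
        (Finset.univ : Finset (Fin (r s 0) × Fin (r s 1)))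
        (fun q => B s q.1 q.2 m3) (fun q b => u s 0 q.1 b.1 * u s 1 q.2 b.2) horth
      calc ∑ b : Fin n × Fin n,
          (∑ m1, ∑ m2, B s m1 m2 m3 * u s 0 m1 b.1 * u s 1 m2 b.2) ^ 2
          = ∑ b : Fin n × Fin n, (∑ q : Fin (r s 0) × Fin (r s 1),
              B s q.1 q.2 m3 * (u s 0 q.1 b.1 * u s 1 q.2 b.2)) ^ 2 := by
            refine Finset.sum_congr rfl fun b _ => ?_
            congr 1
            rw [Fintype.sum_prod_type]
            exact Finset.sum_congr rfl fun m1 _ => Finset.sum_congr rfl fun m2 _ => by ring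
        _ = ∑ q : Fin (r s 0) × Fin (r s 1), (B s q.1 q.2 m3) ^ 2 := hoe
        _ = ∑ m1, ∑ m2, (B s m1 m2 m3) ^ 2 := Fintype.sum_prod_type _
    rw [Finset.sum_congr rfl fun m3 _ => inner m3]
    refine (Finset.sum_comm (f := fun m3 m1 => ∑ m2, (B s m1 m2 m3) ^ 2)).trans ?_
    exact Finset.sum_congr rfl fun m1 _ => Finset.sum_comm
  -- single-mode projection error bounds from mode_bound
  have key0 := mode_bound (hrr 0) (σ 0) (z 0) (v 0) (hz 0) (hv 0)
    (fun (c : Σ s : Fin (S + 1), Fin (r s 0)) i => u c.1 0 c.2 i)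
    (fun c i => hsvd 0 c.1 c.2 i)
    (fun c (b : Fin n × Fin n) =>
      ∑ m2, ∑ m3, B c.1 c.2 m2 m3 * u c.1 1 m2 b.1 * u c.1 2 m3 b.2)
    (fun i (b : Fin n × Fin n) => Uhat i b.1 b.2)
    (fun i b => hUhat0 i b.1 b.2)
  have key1 := mode_bound (hrr 1) (σ 1) (z 1) (v 1) (hz 1) (hv 1)
    (fun (c : Σ s : Fin (S + 1), Fin (r s 1)) j => u c.1 1 c.2 j)
    (fun c j => hsvd 1 c.1 c.2 j)
    (fun c (b : Fin n × Fin n) =>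
      ∑ m1, ∑ m3, B c.1 m1 c.2 m3 * u c.1 0 m1 b.1 * u c.1 2 m3 b.2)
    (fun j (b : Fin n × Fin n) => Uhat b.1 j b.2)
    (fun j b => hUhat1 b.1 j b.2)
  have key2 := mode_bound (hrr 2) (σ 2) (z 2) (v 2) (hz 2) (hv 2)
    (fun (c : Σ s : Fin (S + 1), Fin (r s 2)) k => u c.1 2 c.2 k)
    (fun c k => hsvd 2 c.1 c.2 k)
    (fun c (b : Fin n × Fin n) =>
      ∑ m1, ∑ m2, B c.1 m1 m2 c.2 * u c.1 0 m1 b.1 * u c.1 1 m2 b.2)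
    (fun k (b : Fin n × Fin n) => Uhat b.1 b.2 k)
    (fun k b => hUhat2 b.1 b.2 k)
  -- bound 1 : mode-0 residual
  have bound1 : Real.sqrt (∑ i, ∑ j, ∑ k,
        (Uhat i j k - ∑ i', P 0 i i' * Uhat i' j k) ^ 2)
      ≤ Real.sqrt (∑ s, ∑ m1, ∑ m2, ∑ m3, (B s m1 m2 m3) ^ 2) *
        Real.sqrt (∑ t ∈ Finset.Ico (rr 0) (Rtot 0), (σ 0 t) ^ 2) := by
    rw [← Real.sqrt_mul hB2nn]
    apply Real.sqrt_le_sqrt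
    have conv0 : ∑ i, ∑ j, ∑ k, (Uhat i j k - ∑ i', P 0 i i' * Uhat i' j k) ^ 2
        = ∑ i, ∑ b : Fin n × Fin n, (Uhat i b.1 b.2 -
            ∑ i', (∑ t ∈ Finset.range (rr 0), z 0 t i * z 0 t i') * Uhat i' b.1 b.2) ^ 2 := by
      simp_rw [hP]
      exact Finset.sum_congr rfl fun i _ => prod_split _
    rw [conv0]
    exact le_of_le_of_eq key0 (by rw [hG0sq])
  -- bound for mode-1 residual (before outer contraction)
  have hF2 : ∑ i, ∑ j, ∑ k, (Uhat i j k - ∑ j', P 1 j j' * Uhat i j' k) ^ 2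
      ≤ (∑ s, ∑ m1, ∑ m2, ∑ m3, (B s m1 m2 m3) ^ 2) *
        ∑ t ∈ Finset.Ico (rr 1) (Rtot 1), (σ 1 t) ^ 2 := by
    have conv1 : ∑ i, ∑ j, ∑ k, (Uhat i j k - ∑ j', P 1 j j' * Uhat i j' k) ^ 2
        = ∑ j, ∑ b : Fin n × Fin n, (Uhat b.1 j b.2 -
            ∑ j', (∑ t ∈ Finset.range (rr 1), z 1 t j * z 1 t j') * Uhat b.1 j' b.2) ^ 2 := by
      simp_rw [hP]
      refine (Finset.sum_comm (f := fun i j => ∑ k, (Uhat i j k -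
        ∑ j', (∑ t ∈ Finset.range (rr 1), z 1 t j * z 1 t j') * Uhat i j' k) ^ 2)).trans ?_
      exact Finset.sum_congr rfl fun j _ => prod_split _
    rw [conv1]
    exact le_of_le_of_eq key1 (by rw [hG1sq])
  -- bound for mode-2 residual
  have hF3 : ∑ i, ∑ j, ∑ k, (Uhat i j k - ∑ k', P 2 k k' * Uhat i j k') ^ 2
      ≤ (∑ s, ∑ m1, ∑ m2, ∑ m3, (B s m1 m2 m3) ^ 2) *
        ∑ t ∈ Finset.Ico (rr 2) (Rtot 2), (σ 2 t) ^ 2 := by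
    have conv2 : ∑ i, ∑ j, ∑ k, (Uhat i j k - ∑ k', P 2 k k' * Uhat i j k') ^ 2
        = ∑ k, ∑ b : Fin n × Fin n, (Uhat b.1 b.2 k -
            ∑ k', (∑ t ∈ Finset.range (rr 2), z 2 t k * z 2 t k') * Uhat b.1 b.2 k') ^ 2 := by
      simp_rw [hP]
      refine ((Finset.sum_congr rfl fun i _ => (Finset.sum_comm (f := fun j k =>
        (Uhat i j k - ∑ k', (∑ t ∈ Finset.range (rr 2), z 2 t k * z 2 t k') *
          Uhat i j k') ^ 2))).trans
        (Finset.sum_comm (f := fun i k => ∑ j, (Uhat i j k -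
          ∑ k', (∑ t ∈ Finset.range (rr 2), z 2 t k * z 2 t k') * Uhat i j k') ^ 2))).trans ?_
      exact Finset.sum_congr rfl fun k _ => prod_split _
    rw [conv2]
    exact le_of_le_of_eq key2 (by rw [hG2sq])
  -- contraction: applying the mode-0 projection does not increase the norm
  have cont2 : ∑ i, ∑ j, ∑ k, (∑ i', P 0 i i' *
        (Uhat i' j k - ∑ j', P 1 j j' * Uhat i' j' k)) ^ 2
      ≤ ∑ i, ∑ j, ∑ k, (Uhat i j k - ∑ j', P 1 j j' * Uhat i j' k) ^ 2 := by
    simp_rw [hP]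
    have hc := contract (hrr 0) (z 0) (hz 0)
      (fun i' (b : Fin n × Fin n) => Uhat i' b.1 b.2 -
        ∑ j', (∑ t ∈ Finset.range (rr 1), z 1 t b.1 * z 1 t j') * Uhat i' j' b.2)
    calc ∑ i, ∑ j, ∑ k, (∑ i', (∑ t ∈ Finset.range (rr 0), z 0 t i * z 0 t i') *
          (Uhat i' j k - ∑ j', (∑ t ∈ Finset.range (rr 1), z 1 t j * z 1 t j') *
            Uhat i' j' k)) ^ 2
        = ∑ i, ∑ b : Fin n × Fin n, (∑ i',
            (∑ t ∈ Finset.range (rr 0), z 0 t i * z 0 t i') *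
            (Uhat i' b.1 b.2 - ∑ j', (∑ t ∈ Finset.range (rr 1), z 1 t b.1 * z 1 t j') *
              Uhat i' j' b.2)) ^ 2 :=
          Finset.sum_congr rfl fun i _ => prod_split _
      _ ≤ ∑ i, ∑ b : Fin n × Fin n, (Uhat i b.1 b.2 -
            ∑ j', (∑ t ∈ Finset.range (rr 1), z 1 t b.1 * z 1 t j') * Uhat i j' b.2) ^ 2 := hc
      _ = ∑ i, ∑ j, ∑ k, (Uhat i j k -
            ∑ j', (∑ t ∈ Finset.range (rr 1), z 1 t j * z 1 t j') * Uhat i j' k) ^ 2 :=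
          Finset.sum_congr rfl fun i _ => (prod_split (fun j k => (Uhat i j k -
            ∑ j', (∑ t ∈ Finset.range (rr 1), z 1 t j * z 1 t j') * Uhat i j' k) ^ 2)).symm
  have cont3a : ∑ i, ∑ j, ∑ k, (∑ i', P 0 i i' * (∑ j', P 1 j j' *
        (Uhat i' j' k - ∑ k', P 2 k k' * Uhat i' j' k'))) ^ 2
      ≤ ∑ i, ∑ j, ∑ k, (∑ j', P 1 j j' *
        (Uhat i j' k - ∑ k', P 2 k k' * Uhat i j' k')) ^ 2 := by
    simp_rw [hP]
    calc ∑ i, ∑ j, ∑ k, (∑ i', (∑ t ∈ Finset.range (rr 0), z 0 t i * z 0 t i') *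
          (∑ j', (∑ t ∈ Finset.range (rr 1), z 1 t j * z 1 t j') *
            (Uhat i' j' k - ∑ k', (∑ t ∈ Finset.range (rr 2), z 2 t k * z 2 t k') *
              Uhat i' j' k'))) ^ 2
        = ∑ i, ∑ b : Fin n × Fin n, (∑ i',
            (∑ t ∈ Finset.range (rr 0), z 0 t i * z 0 t i') *
            (∑ j', (∑ t ∈ Finset.range (rr 1), z 1 t b.1 * z 1 t j') *
              (Uhat i' j' b.2 - ∑ k', (∑ t ∈ Finset.range (rr 2), z 2 t b.2 * z 2 t k') *
                Uhat i' j' k'))) ^ 2 :=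
          Finset.sum_congr rfl fun i _ => prod_split _
      _ ≤ ∑ i, ∑ b : Fin n × Fin n, (∑ j',
            (∑ t ∈ Finset.range (rr 1), z 1 t b.1 * z 1 t j') *
            (Uhat i j' b.2 - ∑ k', (∑ t ∈ Finset.range (rr 2), z 2 t b.2 * z 2 t k') *
              Uhat i j' k')) ^ 2 :=
          contract (hrr 0) (z 0) (hz 0) (fun i' (b : Fin n × Fin n) =>
            ∑ j', (∑ t ∈ Finset.range (rr 1), z 1 t b.1 * z 1 t j') *
              (Uhat i' j' b.2 - ∑ k', (∑ t ∈ Finset.range (rr 2), z 2 t b.2 * z 2 t k') *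
                Uhat i' j' k'))
      _ = ∑ i, ∑ j, ∑ k, (∑ j', (∑ t ∈ Finset.range (rr 1), z 1 t j * z 1 t j') *
            (Uhat i j' k - ∑ k', (∑ t ∈ Finset.range (rr 2), z 2 t k * z 2 t k') *
              Uhat i j' k')) ^ 2 :=
          Finset.sum_congr rfl fun i _ => (prod_split (fun j k =>
            (∑ j', (∑ t ∈ Finset.range (rr 1), z 1 t j * z 1 t j') *
              (Uhat i j' k - ∑ k', (∑ t ∈ Finset.range (rr 2), z 2 t k * z 2 t k') *
                Uhat i j' k')) ^ 2)).symm
  have cont3b : ∑ i, ∑ j, ∑ k, (∑ j', P 1 j j' *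
        (Uhat i j' k - ∑ k', P 2 k k' * Uhat i j' k')) ^ 2
      ≤ ∑ i, ∑ j, ∑ k, (Uhat i j k - ∑ k', P 2 k k' * Uhat i j k') ^ 2 := by
    simp_rw [hP]
    calc ∑ i, ∑ j, ∑ k, (∑ j', (∑ t ∈ Finset.range (rr 1), z 1 t j * z 1 t j') *
          (Uhat i j' k - ∑ k', (∑ t ∈ Finset.range (rr 2), z 2 t k * z 2 t k') *
            Uhat i j' k')) ^ 2
        = ∑ j, ∑ i, ∑ k, (∑ j', (∑ t ∈ Finset.range (rr 1), z 1 t j * z 1 t j') *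
            (Uhat i j' k - ∑ k', (∑ t ∈ Finset.range (rr 2), z 2 t k * z 2 t k') *
              Uhat i j' k')) ^ 2 := Finset.sum_comm
      _ = ∑ j, ∑ b : Fin n × Fin n, (∑ j',
            (∑ t ∈ Finset.range (rr 1), z 1 t j * z 1 t j') *
            (Uhat b.1 j' b.2 - ∑ k', (∑ t ∈ Finset.range (rr 2), z 2 t b.2 * z 2 t k') *
              Uhat b.1 j' k')) ^ 2 :=
          Finset.sum_congr rfl fun j _ => prod_split _
      _ ≤ ∑ j, ∑ b : Fin n × Fin n, (Uhat b.1 j b.2 -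
            ∑ k', (∑ t ∈ Finset.range (rr 2), z 2 t b.2 * z 2 t k') * Uhat b.1 j k') ^ 2 :=
          contract (hrr 1) (z 1) (hz 1) (fun j' (b : Fin n × Fin n) =>
            Uhat b.1 j' b.2 - ∑ k', (∑ t ∈ Finset.range (rr 2), z 2 t b.2 * z 2 t k') *
              Uhat b.1 j' k')
      _ = ∑ j, ∑ i, ∑ k, (Uhat i j k -
            ∑ k', (∑ t ∈ Finset.range (rr 2), z 2 t k * z 2 t k') * Uhat i j k') ^ 2 :=
          Finset.sum_congr rfl fun j _ => (prod_split (fun i k => (Uhat i j k -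
            ∑ k', (∑ t ∈ Finset.range (rr 2), z 2 t k * z 2 t k') * Uhat i j k') ^ 2)).symm
      _ = ∑ i, ∑ j, ∑ k, (Uhat i j k -
            ∑ k', (∑ t ∈ Finset.range (rr 2), z 2 t k * z 2 t k') * Uhat i j k') ^ 2 :=
          Finset.sum_comm
  -- remaining mode bounds with contractions
  have bound2 : Real.sqrt (∑ i, ∑ j, ∑ k, (∑ i', P 0 i i' *
        (Uhat i' j k - ∑ j', P 1 j j' * Uhat i' j' k)) ^ 2)
      ≤ Real.sqrt (∑ s, ∑ m1, ∑ m2, ∑ m3, (B s m1 m2 m3) ^ 2) *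
        Real.sqrt (∑ t ∈ Finset.Ico (rr 1) (Rtot 1), (σ 1 t) ^ 2) := by
    rw [← Real.sqrt_mul hB2nn]
    exact Real.sqrt_le_sqrt (le_trans cont2 hF2)
  have bound3 : Real.sqrt (∑ i, ∑ j, ∑ k, (∑ i', P 0 i i' * (∑ j', P 1 j j' *
        (Uhat i' j' k - ∑ k', P 2 k k' * Uhat i' j' k'))) ^ 2)
      ≤ Real.sqrt (∑ s, ∑ m1, ∑ m2, ∑ m3, (B s m1 m2 m3) ^ 2) *
        Real.sqrt (∑ t ∈ Finset.Ico (rr 2) (Rtot 2), (σ 2 t) ^ 2) := by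
    rw [← Real.sqrt_mul hB2nn]
    exact Real.sqrt_le_sqrt (le_trans cont3a (le_trans cont3b hF3))
  -- telescoping decomposition
  have hdecomp : ∀ i j k, Uhat i j k - U0 i j k =
      (Uhat i j k - ∑ i', P 0 i i' * Uhat i' j k) +
      ((∑ i', P 0 i i' * (Uhat i' j k - ∑ j', P 1 j j' * Uhat i' j' k)) +
       (∑ i', P 0 i i' * (∑ j', P 1 j j' *
          (Uhat i' j' k - ∑ k', P 2 k k' * Uhat i' j' k')))) := by
    intro i j k
    have h1 : ∑ i', P 0 i i' * (Uhat i' j k - ∑ j', P 1 j j' * Uhat i' j' k)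
        = (∑ i', P 0 i i' * Uhat i' j k) -
          ∑ i', P 0 i i' * (∑ j', P 1 j j' * Uhat i' j' k) := by
      rw [← Finset.sum_sub_distrib]
      exact Finset.sum_congr rfl fun i' _ => by ring
    have h2 : ∑ i', P 0 i i' * (∑ j', P 1 j j' *
          (Uhat i' j' k - ∑ k', P 2 k k' * Uhat i' j' k'))
        = (∑ i', P 0 i i' * (∑ j', P 1 j j' * Uhat i' j' k)) -
          ∑ i', P 0 i i' * (∑ j', P 1 j j' * (∑ k', P 2 k k' * Uhat i' j' k')) := by
      rw [← Finset.sum_sub_distrib]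
      refine Finset.sum_congr rfl fun i' _ => ?_
      rw [← mul_sub]
      congr 1
      rw [← Finset.sum_sub_distrib]
      exact Finset.sum_congr rfl fun j' _ => by ring
    have h3 : U0 i j k = ∑ i', P 0 i i' * (∑ j', P 1 j j' *
        (∑ k', P 2 k k' * Uhat i' j' k')) := by
      rw [hU0]
      refine Finset.sum_congr rfl fun i' _ => ?_
      rw [Finset.mul_sum]
      refine Finset.sum_congr rfl fun j' _ => ?_
      rw [Finset.mul_sum, Finset.mul_sum]
      exact Finset.sum_congr rfl fun k' _ => by ring
    rw [h1, h2, h3]; ring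
  have hconv3 : ∀ f : Fin n → Fin n → Fin n → ℝ,
      ∑ i, ∑ j, ∑ k, f i j k = ∑ p : Fin n × Fin n × Fin n, f p.1 p.2.1 p.2.2 := by
    intro f
    rw [Fintype.sum_prod_type]
    exact Finset.sum_congr rfl fun i _ => prod_split _
  -- triangle inequality
  have tri2 : Real.sqrt (∑ i, ∑ j, ∑ k, (Uhat i j k - U0 i j k) ^ 2) ≤
      Real.sqrt (∑ i, ∑ j, ∑ k, (Uhat i j k - ∑ i', P 0 i i' * Uhat i' j k) ^ 2)
      + (Real.sqrt (∑ i, ∑ j, ∑ k, (∑ i', P 0 i i' *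
          (Uhat i' j k - ∑ j', P 1 j j' * Uhat i' j' k)) ^ 2)
        + Real.sqrt (∑ i, ∑ j, ∑ k, (∑ i', P 0 i i' * (∑ j', P 1 j j' *
            (Uhat i' j' k - ∑ k', P 2 k k' * Uhat i' j' k'))) ^ 2)) := by
    rw [hconv3, hconv3, hconv3, hconv3]
    have hd : ∑ p : Fin n × Fin n × Fin n,
        (Uhat p.1 p.2.1 p.2.2 - U0 p.1 p.2.1 p.2.2) ^ 2
        = ∑ p : Fin n × Fin n × Fin n,
          ((Uhat p.1 p.2.1 p.2.2 - ∑ i', P 0 p.1 i' * Uhat i' p.2.1 p.2.2) +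
           ((∑ i', P 0 p.1 i' * (Uhat i' p.2.1 p.2.2 -
              ∑ j', P 1 p.2.1 j' * Uhat i' j' p.2.2)) +
            (∑ i', P 0 p.1 i' * (∑ j', P 1 p.2.1 j' *
              (Uhat i' j' p.2.2 - ∑ k', P 2 p.2.2 k' * Uhat i' j' k'))))) ^ 2 :=
      Finset.sum_congr rfl fun p _ => by rw [hdecomp p.1 p.2.1 p.2.2]
    rw [hd]
    exact (tri_sum _ _).trans (add_le_add le_rfl (tri_sum _ _))
  refine tri2.trans ?_
  refine (add_le_add bound1 (add_le_add bound2 bound3)).trans (le_of_eq ?_)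
  rw [Fin.sum_univ_three]
  ring
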